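/- The number of permutations of {1,…,n} (n ≥ 3) that avoid the pattern 123 and contain the pattern 132 exactly once equals (n-2)·2^(n-3). -/
import Mathlib


/-- An occurrence of the pattern `τ` in `α` at the strictly increasing
index sequence `f`: the subsequence `α ∘ f` is order-isomorphic to `τ`. -/
def PattOccursAt {k n : ℕ} (τ : Equiv.Perm (Fin k)) (α : Equiv.Perm (Fin n))
    (f : Fin k → Fin n) : Prop :=
  StrictMono f ∧ ∀ i j : Fin k, τ i < τ j ↔ α (f i) < α (f j)

/-- `α` contains the pattern `τ`. -/
def Contains {k n : ℕ} (τ : Equiv.Perm (Fin k)) (α : Equiv.Perm (Fin n)) : Prop :=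
  ∃ f, PattOccursAt τ α f

/-- `α` avoids the pattern `τ`. -/
def Avoids {k n : ℕ} (τ : Equiv.Perm (Fin k)) (α : Equiv.Perm (Fin n)) : Prop :=
  ¬ Contains τ α

/-- `α` contains the pattern `τ` exactly once. -/
def ContainsExactlyOnce {k n : ℕ} (τ : Equiv.Perm (Fin k)) (α : Equiv.Perm (Fin n)) : Prop :=
  ∃! f, PattOccursAt τ α f

/-- `T_k^m`: the permutations `σ` of length `k` with first entry `σ(1) = m`
(one-based; in `Fin k` terms, `(σ 0) + 1 = m`). -/
def Tkm (k m : ℕ) : Set (Equiv.Perm (Fin k)) :=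
  {σ | ∀ i : Fin k, (i : ℕ) = 0 → (σ i : ℕ) + 1 = m}


open Equiv

namespace S7

variable {N : ℕ}

def Occ {n : ℕ} (α : Perm (Fin n)) (t : Fin n × Fin n × Fin n) : Prop :=
  t.1 < t.2.1 ∧ t.2.1 < t.2.2 ∧ α t.1 < α t.2.2 ∧ α t.2.2 < α t.2.1

def Occ3 {n : ℕ} (α : Perm (Fin n)) (t : Fin n × Fin n × Fin n) : Prop :=
  t.1 < t.2.1 ∧ t.2.1 < t.2.2 ∧ α t.1 < α t.2.1 ∧ α t.2.1 < α t.2.2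

def Sol {n : ℕ} (α : Perm (Fin n)) : Prop :=
  (¬ ∃ t, Occ3 α t) ∧ (∃! t, Occ α t)

def BAv {n : ℕ} (α : Perm (Fin n)) : Prop :=
  ∀ i j k : Fin n, i < j → j < k → α j < α i ∨ α k < α i

def pre (p : Fin (N+1)) (β : Perm (Fin N)) : Perm (Fin (N+1)) :=
  ((finSuccEquiv N).trans β.optionCongr).trans (finSuccEquiv' p).symm

@[simp] lemma pre_zero (p : Fin (N+1)) (β : Perm (Fin N)) : pre p β 0 = p := by
  simp [pre]

@[simp] lemma pre_succ (p : Fin (N+1)) (β : Perm (Fin N)) (i : Fin N) :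
    pre p β i.succ = p.succAbove (β i) := by
  simp [pre, finSuccEquiv'_symm_some]

lemma succAbove_val (p : Fin (N+1)) (v : Fin N) :
    (p.succAbove v : ℕ) = if (v : ℕ) < (p : ℕ) then (v : ℕ) else (v : ℕ) + 1 := by
  rw [Fin.succAbove]
  split_ifs with h1 h2 h2 <;> simp_all [Fin.lt_def] <;> omega

lemma pre_succ_lt_iff (p : Fin (N+1)) (β : Perm (Fin N)) (i j : Fin N) :
    pre p β i.succ < pre p β j.succ ↔ β i < β j := by
  simp only [Fin.lt_def, pre_succ, succAbove_val]
  split_ifs <;> omega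

lemma pre_zero_lt_succ_iff (p : Fin (N+1)) (β : Perm (Fin N)) (i : Fin N) :
    pre p β 0 < pre p β i.succ ↔ (p : ℕ) ≤ (β i : ℕ) := by
  simp only [Fin.lt_def, pre_zero, pre_succ, succAbove_val]
  split_ifs <;> omega

lemma pre_succ_lt_zero_iff (p : Fin (N+1)) (β : Perm (Fin N)) (i : Fin N) :
    pre p β i.succ < pre p β 0 ↔ (β i : ℕ) < (p : ℕ) := by
  simp only [Fin.lt_def, pre_zero, pre_succ, succAbove_val]
  split_ifs <;> omega

end S7

namespace S7
variable {N : ℕ}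

def succT {n : ℕ} (t : Fin n × Fin n × Fin n) : Fin (n+1) × Fin (n+1) × Fin (n+1) :=
  (t.1.succ, t.2.1.succ, t.2.2.succ)

lemma succT_inj {n : ℕ} : Function.Injective (succT (n := n)) := by
  rintro ⟨a, b, c⟩ ⟨d, e, f⟩ h
  simp only [succT, Prod.mk.injEq, Fin.succ_inj] at h
  simp [Prod.ext_iff, h.1, h.2.1, h.2.2]

lemma occ_succT_iff (p : Fin (N+1)) (β : Perm (Fin N)) (t : Fin N × Fin N × Fin N) :
    Occ (pre p β) (succT t) ↔ Occ β t := by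
  obtain ⟨a, b, c⟩ := t
  simp only [Occ, succT, Fin.succ_lt_succ_iff, pre_succ_lt_iff]

lemma occ3_succT_iff (p : Fin (N+1)) (β : Perm (Fin N)) (t : Fin N × Fin N × Fin N) :
    Occ3 (pre p β) (succT t) ↔ Occ3 β t := by
  obtain ⟨a, b, c⟩ := t
  simp only [Occ3, succT, Fin.succ_lt_succ_iff, pre_succ_lt_iff]

/-- A triple whose first component is nonzero is `succT` of something. -/
lemma exists_succT {t : Fin (N+1) × Fin (N+1) × Fin (N+1)} (h1 : t.1 < t.2.1)
    (h2 : t.2.1 < t.2.2) (h0 : t.1 ≠ 0) : ∃ t', t = succT t' := by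
  obtain ⟨a, b, c⟩ := t
  obtain ⟨a', rfl⟩ := Fin.exists_succ_eq_of_ne_zero h0
  obtain ⟨b', rfl⟩ := Fin.exists_succ_eq_of_ne_zero (x := b)
    (by intro h; subst h; exact absurd h1 (by simp [Fin.lt_def]))
  obtain ⟨c', rfl⟩ := Fin.exists_succ_eq_of_ne_zero (x := c)
    (by intro h; subst h; exact absurd h2 (by simp [Fin.lt_def]))
  exact ⟨(a', b', c'), rfl⟩

lemma pre_inj : Function.Injective (fun x : Fin (N+1) × Perm (Fin N) => pre x.1 x.2) := by
  rintro ⟨p, β⟩ ⟨q, γ⟩ h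
  simp only at h
  have h0 : p = q := by
    have := congrArg (fun e : Perm (Fin (N+1)) => e 0) h
    simpa using this
  subst h0
  refine Prod.ext rfl ?_
  have : β = γ := by
    ext i
    have := congrArg (fun e : Perm (Fin (N+1)) => e i.succ) h
    simp only [pre_succ] at this
    exact congrArg Fin.val (Fin.succAbove_right_injective this)
  rw [this]

lemma pre_right_inj (p : Fin (N+1)) : Function.Injective (pre p) := by
  intro β γ h
  have := pre_inj (a₁ := (p, β)) (a₂ := (p, γ)) h
  simpa using this

lemma pre_surj (α : Perm (Fin (N+1))) : ∃ β, α = pre (α 0) β := by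
  have hb : Function.Bijective (fun x : Fin (N+1) × Perm (Fin N) => pre x.1 x.2) := by
    rw [Fintype.bijective_iff_injective_and_card]
    refine ⟨pre_inj, ?_⟩
    simp [Fintype.card_perm, Nat.factorial_succ]
  obtain ⟨⟨p, β⟩, hp⟩ := hb.surjective α
  simp only at hp
  have h2 : p = α 0 := by rw [← hp]; simp
  exact ⟨β, by rw [← hp, h2, pre_zero]⟩

end S7

namespace S7
variable {N : ℕ}

lemma no_two_big {p : Fin (N+1)} (hp : N ≤ (p : ℕ) + 1) {β : Perm (Fin N)} {i j : Fin N}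
    (hij : i ≠ j) (hi : (p : ℕ) ≤ (β i : ℕ)) (hj : (p : ℕ) ≤ (β j : ℕ)) : False := by
  have h1 : (β i : ℕ) < N := (β i).is_lt
  have h2 : (β j : ℕ) < N := (β j).is_lt
  have : β i = β j := Fin.ext (by omega)
  exact hij (β.injective this)

/-- If `p ≥ N-1`, no position `0` can be the "1" of a pattern. -/
lemma key_zero {p : Fin (N+1)} (hp : N ≤ (p : ℕ) + 1) (β : Perm (Fin N))
    {b c : Fin (N+1)} (h1 : (0 : Fin (N+1)) < b) (h2 : b < c)
    (hb : pre p β 0 < pre p β b) (hc : pre p β 0 < pre p β c) : False := by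
  obtain ⟨b', rfl⟩ := Fin.exists_succ_eq_of_ne_zero (x := b) h1.ne'
  obtain ⟨c', rfl⟩ := Fin.exists_succ_eq_of_ne_zero (x := c) (h1.trans h2).ne'
  have hb' := (pre_zero_lt_succ_iff p β b').mp hb
  have hc' := (pre_zero_lt_succ_iff p β c').mp hc
  have hne : b' ≠ c' := by
    intro h; subst h; exact absurd h2 (lt_irrefl _)
  exact no_two_big hp hne hb' hc'

lemma preA {p : Fin (N+1)} (hp : N ≤ (p : ℕ) + 1) (β : Perm (Fin N)) :
    Sol (pre p β) ↔ Sol β := by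
  constructor
  · rintro ⟨h1, t0, ht0, hu⟩
    have hne : t0.1 ≠ 0 := by
      intro h
      obtain ⟨ha, hb, hc, hd⟩ := ht0
      exact key_zero hp β (h ▸ ha) hb (h ▸ hc.trans hd) (h ▸ hc)
    obtain ⟨t', rfl⟩ := exists_succT ht0.1 ht0.2.1 hne
    have hocc : Occ β t' := (occ_succT_iff p β t').mp ht0
    refine ⟨?_, t', hocc, ?_⟩
    · rintro ⟨s, hs⟩
      exact h1 ⟨succT s, (occ3_succT_iff p β s).mpr hs⟩
    · intro s hs
      exact succT_inj (hu (succT s) ((occ_succT_iff p β s).mpr hs))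
  · rintro ⟨h1, t0, ht0, hu⟩
    refine ⟨?_, succT t0, (occ_succT_iff p β t0).mpr ht0, ?_⟩
    · rintro ⟨s, hs⟩
      have hne : s.1 ≠ 0 := by
        intro h
        obtain ⟨ha, hb, hc, hd⟩ := hs
        exact key_zero hp β (h ▸ ha) hb (h ▸ hc) (h ▸ hc.trans hd)
      obtain ⟨s', rfl⟩ := exists_succT hs.1 hs.2.1 hne
      exact h1 ⟨s', (occ3_succT_iff p β s').mp hs⟩
    · intro s hs
      have hne : s.1 ≠ 0 := by
        intro h
        obtain ⟨ha, hb, hc, hd⟩ := hs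
        exact key_zero hp β (h ▸ ha) hb (h ▸ hc.trans hd) (h ▸ hc)
      obtain ⟨s', rfl⟩ := exists_succT hs.1 hs.2.1 hne
      rw [hu s' ((occ_succT_iff p β s').mp hs)]

lemma preBAv {p : Fin (N+1)} (hp : N ≤ (p : ℕ) + 1) (β : Perm (Fin N)) :
    BAv (pre p β) ↔ BAv β := by
  constructor
  · intro h i j k hij hjk
    have := h i.succ j.succ k.succ (by simpa using hij) (by simpa using hjk)
    rcases this with h' | h'
    · exact Or.inl ((pre_succ_lt_iff p β j i).mp h')
    · exact Or.inr ((pre_succ_lt_iff p β k i).mp h')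
  · intro h i j k hij hjk
    rcases Fin.eq_zero_or_eq_succ i with rfl | ⟨i', rfl⟩
    · obtain ⟨j', rfl⟩ := Fin.exists_succ_eq_of_ne_zero (x := j) hij.ne'
      obtain ⟨k', rfl⟩ := Fin.exists_succ_eq_of_ne_zero (x := k) (hij.trans hjk).ne'
      by_contra hcon
      push_neg at hcon
      obtain ⟨hc1, hc2⟩ := hcon
      have hb : (p : ℕ) ≤ (β j' : ℕ) := by
        have := (pre_succ_lt_zero_iff p β j').not.mp (not_lt.mpr hc1)
        omega
      have hc : (p : ℕ) ≤ (β k' : ℕ) := by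
        have := (pre_succ_lt_zero_iff p β k').not.mp (not_lt.mpr hc2)
        omega
      have hne : j' ≠ k' := by
        intro hh; subst hh; exact absurd hjk (lt_irrefl _)
      exact no_two_big hp hne hb hc
    · have hj : j ≠ 0 := ((Fin.succ_pos i').trans hij).ne'
      obtain ⟨j', rfl⟩ := Fin.exists_succ_eq_of_ne_zero hj
      have hk : k ≠ 0 := ((Fin.succ_pos i').trans (hij.trans hjk)).ne'
      obtain ⟨k', rfl⟩ := Fin.exists_succ_eq_of_ne_zero hk
      rcases h i' j' k' (by simpa using hij) (by simpa using hjk) with h' | h'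
      · exact Or.inl ((pre_succ_lt_iff p β j' i').mpr h')
      · exact Or.inr ((pre_succ_lt_iff p β k' i').mpr h')

end S7

namespace S7
variable {N : ℕ}

lemma bav_iff {n : ℕ} (α : Perm (Fin n)) :
    BAv α ↔ (¬ ∃ t, Occ3 α t) ∧ (¬ ∃ t, Occ α t) := by
  constructor
  · intro h
    constructor
    · rintro ⟨⟨a, b, c⟩, h1, h2, h3, h4⟩
      rcases h a b c h1 h2 with h' | h'
      · exact absurd h3 (not_lt.mpr h'.le)
      · exact absurd (h3.trans h4) (not_lt.mpr h'.le)
    · rintro ⟨⟨a, b, c⟩, h1, h2, h3, h4⟩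
      rcases h a b c h1 h2 with h' | h'
      · exact absurd (h3.trans h4) (not_lt.mpr h'.le)
      · exact absurd h3 (not_lt.mpr h'.le)
  · rintro ⟨h3, h132⟩ i j k hij hjk
    by_contra hcon
    push_neg at hcon
    obtain ⟨hc1, hc2⟩ := hcon
    have hij' : α i < α j := lt_of_le_of_ne hc1 (fun h => hij.ne (α.injective h))
    have hik' : α i < α k := lt_of_le_of_ne hc2 (fun h => (hij.trans hjk).ne (α.injective h))
    rcases lt_or_gt_of_ne (fun h : α j = α k => hjk.ne (α.injective h)) with h' | h'
    · exact h3 ⟨(i, j, k), hij, hjk, hij', h'⟩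
    · exact h132 ⟨(i, j, k), hij, hjk, hik', h'⟩

lemma bav_first (α : Perm (Fin (N+1))) (h : BAv α) : N ≤ (α 0 : ℕ) + 1 := by
  by_contra hcon
  push_neg at hcon
  have hN2 : 2 ≤ N := by omega
  set v1 : Fin (N+1) := Fin.last N with hv1
  set v2 : Fin (N+1) := ⟨N-1, by omega⟩ with hv2
  set a := α.symm v1 with ha
  set b := α.symm v2 with hb
  have hva : α a = v1 := α.apply_symm_apply v1
  have hvb : α b = v2 := α.apply_symm_apply v2
  have ha0 : a ≠ 0 := by
    intro hh; rw [hh] at hva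
    have := congrArg Fin.val hva
    simp [hv1] at this; omega
  have hb0 : b ≠ 0 := by
    intro hh; rw [hh] at hvb
    have := congrArg Fin.val hvb
    simp [hv2] at this; omega
  have hab : a ≠ b := by
    intro hh; rw [hh, hvb] at hva
    have := congrArg Fin.val hva
    simp [hv1, hv2] at this; omega
  have hlt1 : (α 0 : ℕ) < (v1 : ℕ) := by simp [hv1]; omega
  have hlt2 : (α 0 : ℕ) < (v2 : ℕ) := by simp [hv2]; omega
  rcases lt_or_gt_of_ne hab with h' | h'
  · rcases h 0 a b (Fin.pos_iff_ne_zero.mpr ha0) h' with hx | hx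
    · rw [hva] at hx; exact absurd (Fin.lt_def.mp hx) (by omega)
    · rw [hvb] at hx; exact absurd (Fin.lt_def.mp hx) (by omega)
  · rcases h 0 b a (Fin.pos_iff_ne_zero.mpr hb0) h' with hx | hx
    · rw [hvb] at hx; exact absurd (Fin.lt_def.mp hx) (by omega)
    · rw [hva] at hx; exact absurd (Fin.lt_def.mp hx) (by omega)

lemma sol_first (α : Perm (Fin (N+1))) (h : Sol α) : N ≤ (α 0 : ℕ) + 2 := by
  by_contra hcon
  push_neg at hcon
  have hN3 : 3 ≤ N := by omega
  obtain ⟨h1, t0, ht0, hu⟩ := h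
  set v1 : Fin (N+1) := Fin.last N with hv1
  set v2 : Fin (N+1) := ⟨N-1, by omega⟩ with hv2
  set v3 : Fin (N+1) := ⟨N-2, by omega⟩ with hv3
  set a := α.symm v1 with ha
  set b := α.symm v2 with hb
  set c := α.symm v3 with hc
  have hva : α a = v1 := α.apply_symm_apply v1
  have hvb : α b = v2 := α.apply_symm_apply v2
  have hvc : α c = v3 := α.apply_symm_apply v3
  have hval1 : (α a : ℕ) = N := by rw [hva]; simp [hv1]
  have hval2 : (α b : ℕ) = N - 1 := by rw [hvb]
  have hval3 : (α c : ℕ) = N - 2 := by rw [hvc]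
  have h0 : (α 0 : ℕ) + 2 < N := hcon
  have ha0 : a ≠ 0 := fun hh => by rw [hh] at hval1; omega
  have hb0 : b ≠ 0 := fun hh => by rw [hh] at hval2; omega
  have hc0 : c ≠ 0 := fun hh => by rw [hh] at hval3; omega
  have hab : a ≠ b := fun hh => by rw [hh] at hval1; omega
  have hbc : b ≠ c := fun hh => by rw [hh] at hval2; omega
  have hac : a ≠ c := fun hh => by rw [hh] at hval1; omega
  -- positions must be in order a < b < c
  have hab' : a < b := by
    rcases lt_or_gt_of_ne hab with h' | h'
    · exact h'
    · exact absurd ⟨(0, b, a), Fin.pos_iff_ne_zero.mpr hb0, h',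
        show α 0 < α b from Fin.lt_def.mpr (by omega),
        show α b < α a from Fin.lt_def.mpr (by omega)⟩ h1
  have hbc' : b < c := by
    rcases lt_or_gt_of_ne hbc with h' | h'
    · exact h'
    · exact absurd ⟨(0, c, b), Fin.pos_iff_ne_zero.mpr hc0, h',
        show α 0 < α c from Fin.lt_def.mpr (by omega),
        show α c < α b from Fin.lt_def.mpr (by omega)⟩ h1
  have hocc1 : Occ α (0, a, b) :=
    ⟨Fin.pos_iff_ne_zero.mpr ha0, hab', show α 0 < α b from Fin.lt_def.mpr (by omega),
      show α b < α a from Fin.lt_def.mpr (by omega)⟩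
  have hocc2 : Occ α (0, a, c) :=
    ⟨Fin.pos_iff_ne_zero.mpr ha0, hab'.trans hbc',
      show α 0 < α c from Fin.lt_def.mpr (by omega),
      show α c < α a from Fin.lt_def.mpr (by omega)⟩
  have := (hu _ hocc1).trans (hu _ hocc2).symm
  simp only [Prod.mk.injEq] at this
  exact hbc this.2.2

end S7

namespace S7

lemma preB {M : ℕ} {p : Fin (M+3)} (hp : (p : ℕ) = M) (β : Perm (Fin (M+2))) :
    Sol (pre p β) ↔ (BAv β ∧ (β 0 : ℕ) = M + 1) := by
  set α := pre p β with hα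
  set vmax : Fin (M+2) := ⟨M+1, by omega⟩ with hvmax
  set vsec : Fin (M+2) := ⟨M, by omega⟩ with hvsec
  set a := β.symm vmax with ha
  set b := β.symm vsec with hb
  have hva : β a = vmax := β.apply_symm_apply vmax
  have hvb : β b = vsec := β.apply_symm_apply vsec
  have hvab : vmax ≠ vsec := by
    intro hh
    have := congrArg Fin.val hh
    simp [hvmax, hvsec] at this
  have hab : a ≠ b := fun hh => hvab (by rw [← hva, ← hvb, hh])
  have hz : (α 0 : ℕ) = M := by rw [hα, pre_zero, hp]
  have hsv : ∀ i : Fin (M+2), (α i.succ : ℕ) = if (β i : ℕ) < M then (β i : ℕ)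
      else (β i : ℕ) + 1 := by
    intro i; rw [hα, pre_succ, succAbove_val, hp]
  have hsa : (α a.succ : ℕ) = M + 2 := by
    rw [hsv a, hva, hvmax]
    simp only []
    rw [if_neg (by omega)]
  have hsb : (α b.succ : ℕ) = M + 1 := by
    rw [hsv b, hvb, hvsec]
    simp only []
    rw [if_neg (by omega)]
  have hforce : ∀ j k : Fin (M+2), α 0 < α j.succ → α 0 < α k.succ → β j < β k →
      j = b ∧ k = a := by
    intro j k hj hk hjk
    have hj' : (p : ℕ) ≤ (β j : ℕ) := (pre_zero_lt_succ_iff p β j).mp hj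
    have hk' : (p : ℕ) ≤ (β k : ℕ) := (pre_zero_lt_succ_iff p β k).mp hk
    have hjN := (β j).is_lt
    have hkN := (β k).is_lt
    have hjk' := Fin.lt_def.mp hjk
    rw [hp] at hj' hk'
    have hjval : (β j : ℕ) = M := by omega
    have hkval : (β k : ℕ) = M + 1 := by omega
    constructor
    · have hh : β j = vsec := Fin.ext (by simpa [hvsec] using hjval)
      rw [hb, ← hh, Equiv.symm_apply_apply]
    · have hh : β k = vmax := Fin.ext (by simpa [hvmax] using hkval)
      rw [ha, ← hh, Equiv.symm_apply_apply]
  constructor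
  · rintro ⟨h1, t0, ht0, hu⟩
    have hav3 : ¬ ∃ t, Occ3 β t := by
      rintro ⟨s, hs⟩
      exact h1 ⟨succT s, (occ3_succT_iff p β s).mpr hs⟩
    have haltb : a < b := by
      rcases lt_or_gt_of_ne hab with h' | h'
      · exact h'
      · refine absurd ⟨((0 : Fin (M+3)), b.succ, a.succ), Fin.succ_pos b,
          by simpa using h',
          show α 0 < α b.succ from Fin.lt_def.mpr (by omega),
          show α b.succ < α a.succ from Fin.lt_def.mpr (by omega)⟩ h1
    have hoccmain : Occ α (0, a.succ, b.succ) :=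
      ⟨Fin.succ_pos a, by simpa using haltb,
        show α 0 < α b.succ from Fin.lt_def.mpr (by omega),
        show α b.succ < α a.succ from Fin.lt_def.mpr (by omega)⟩
    have ht0main : t0 = (0, a.succ, b.succ) := (hu _ hoccmain).symm
    have hav132 : ¬ ∃ t, Occ β t := by
      rintro ⟨s, hs⟩
      have hh := hu (succT s) ((occ_succT_iff p β s).mpr hs)
      rw [ht0main] at hh
      have h0 := congrArg (fun t : Fin (M+3) × Fin (M+3) × Fin (M+3) => t.1) hh
      simp only [succT] at h0
      exact Fin.succ_ne_zero _ h0
    refine ⟨(bav_iff β).mpr ⟨hav3, hav132⟩, ?_⟩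
    have ha0 : a = 0 := by
      by_contra ha0
      have h0a : (0 : Fin (M+2)) < a := Fin.pos_iff_ne_zero.mpr ha0
      have hβ0a : (β 0 : ℕ) < M := by
        have hne1 : β 0 ≠ vmax := by
          intro hh
          exact ha0 (by rw [ha, ← hh, Equiv.symm_apply_apply])
        have hne2 : β 0 ≠ vsec := by
          intro hh
          have : b = 0 := by rw [hb, ← hh, Equiv.symm_apply_apply]
          rw [this] at haltb
          exact absurd (h0a.trans haltb) (lt_irrefl _)
        have h1' : (β 0 : ℕ) ≠ M + 1 := fun hh => hne1 (Fin.ext (by simpa [hvmax] using hh))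
        have h2' : (β 0 : ℕ) ≠ M := fun hh => hne2 (Fin.ext (by simpa [hvsec] using hh))
        have := (β 0).is_lt
        omega
      rcases hB' : (bav_iff β).mpr ⟨hav3, hav132⟩ 0 a b h0a haltb with hx | hx
      · rw [hva] at hx
        have := Fin.lt_def.mp hx
        simp [hvmax] at this
        omega
      · rw [hvb] at hx
        have := Fin.lt_def.mp hx
        simp [hvsec] at this
        omega
    rw [ha] at ha0
    have hh : β 0 = vmax := by rw [← ha0, Equiv.apply_symm_apply]
    rw [hh]
  · rintro ⟨hB, h0⟩
    have hβ0 : β 0 = vmax := Fin.ext (by simpa [hvmax] using h0)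
    have ha0 : a = 0 := by rw [ha, ← hβ0, Equiv.symm_apply_apply]
    have hb0 : b ≠ 0 := by
      intro hh
      rw [hh, hβ0] at hvb
      exact hvab hvb
    obtain ⟨hav3, hav132⟩ := (bav_iff β).mp hB
    have hs0 : (α (0 : Fin (M+2)).succ : ℕ) = M + 2 := by rw [← ha0]; exact hsa
    have hocc0 : Occ α (0, (0 : Fin (M+2)).succ, b.succ) := by
      refine ⟨Fin.succ_pos 0, Fin.succ_lt_succ_iff.mpr (Fin.pos_iff_ne_zero.mpr hb0),
        show α 0 < α b.succ from Fin.lt_def.mpr (by omega),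
        show α b.succ < α (0 : Fin (M+2)).succ from Fin.lt_def.mpr (by omega)⟩
    refine ⟨?_, (0, (0 : Fin (M+2)).succ, b.succ), hocc0, ?_⟩
    · rintro ⟨⟨s1, s2, s3⟩, hs1, hs2, hs3, hs4⟩
      rcases Fin.eq_zero_or_eq_succ s1 with hz1 | ⟨s1', hs1'⟩
      · subst hz1
        obtain ⟨j, hj⟩ := Fin.exists_succ_eq_of_ne_zero (x := s2) hs1.ne'
        obtain ⟨k, hk⟩ := Fin.exists_succ_eq_of_ne_zero (x := s3) (hs1.trans hs2).ne'
        subst hj; subst hk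
        have hjk : β j < β k := (pre_succ_lt_iff p β j k).mp hs4
        obtain ⟨hjb, hka⟩ := hforce j k hs3 (hs3.trans hs4) hjk
        rw [hka, ha0] at hs2
        exact absurd (Fin.succ_lt_succ_iff.mp hs2) (Fin.not_lt_zero j)
      · subst hs1'
        obtain ⟨j, hj⟩ := Fin.exists_succ_eq_of_ne_zero (x := s2)
          ((Fin.succ_pos s1').trans hs1).ne'
        obtain ⟨k, hk⟩ := Fin.exists_succ_eq_of_ne_zero (x := s3)
          ((Fin.succ_pos s1').trans (hs1.trans hs2)).ne'
        subst hj; subst hk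
        exact hav3 ⟨(s1', j, k), Fin.succ_lt_succ_iff.mp hs1, Fin.succ_lt_succ_iff.mp hs2,
          (pre_succ_lt_iff p β s1' j).mp hs3, (pre_succ_lt_iff p β j k).mp hs4⟩
    · rintro ⟨s1, s2, s3⟩ ⟨hs1, hs2, hs3, hs4⟩
      rcases Fin.eq_zero_or_eq_succ s1 with hz1 | ⟨s1', hs1'⟩
      · subst hz1
        obtain ⟨j, hj⟩ := Fin.exists_succ_eq_of_ne_zero (x := s2) hs1.ne'
        obtain ⟨k, hk⟩ := Fin.exists_succ_eq_of_ne_zero (x := s3) (hs1.trans hs2).ne'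
        subst hj; subst hk
        have hjk : β k < β j := (pre_succ_lt_iff p β k j).mp hs4
        obtain ⟨hkb, hja⟩ := hforce k j hs3 (hs3.trans hs4) hjk
        rw [hkb, hja, ha0]
      · subst hs1'
        obtain ⟨j, hj⟩ := Fin.exists_succ_eq_of_ne_zero (x := s2)
          ((Fin.succ_pos s1').trans hs1).ne'
        obtain ⟨k, hk⟩ := Fin.exists_succ_eq_of_ne_zero (x := s3)
          ((Fin.succ_pos s1').trans (hs1.trans hs2)).ne'
        subst hj; subst hk
        exact absurd ⟨(s1', j, k), Fin.succ_lt_succ_iff.mp hs1, Fin.succ_lt_succ_iff.mp hs2,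
          (pre_succ_lt_iff p β s1' k).mp hs3, (pre_succ_lt_iff p β k j).mp hs4⟩ hav132

end S7

namespace S7

def SolSet (n : ℕ) : Set (Perm (Fin n)) := {α | Sol α}
def BAvSet (n : ℕ) : Set (Perm (Fin n)) := {α | BAv α}

lemma pre_surj' {N : ℕ} (α : Perm (Fin (N+1))) : ∃ p β, α = pre p β := by
  obtain ⟨β, hβ⟩ := pre_surj α
  exact ⟨α 0, β, hβ⟩

lemma bavSet_succ (M : ℕ) :
    BAvSet (M+2) = pre (Fin.last (M+1)) '' BAvSet (M+1)
      ∪ pre ⟨M, by omega⟩ '' BAvSet (M+1) := by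
  ext α
  simp only [BAvSet, Set.mem_union, Set.mem_image, Set.mem_setOf_eq]
  constructor
  · intro h
    obtain ⟨p, β, rfl⟩ := pre_surj' α
    have hp1 : M + 1 ≤ (p : ℕ) + 1 := by
      have := bav_first (pre p β) h
      rwa [pre_zero] at this
    have hβ : BAv β := (preBAv (by omega) β).mp h
    have hpN : (p : ℕ) ≤ M + 1 := by omega
    rcases (by omega : (p : ℕ) = M + 1 ∨ (p : ℕ) = M) with hc | hc
    · left
      exact ⟨β, hβ, by rw [show p = Fin.last (M+1) from Fin.ext (by simp [hc])]⟩
    · right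
      exact ⟨β, hβ, by rw [show p = (⟨M, by omega⟩ : Fin (M+2)) from Fin.ext (by simp [hc])]⟩
  · rintro (⟨β, hβ, rfl⟩ | ⟨β, hβ, rfl⟩)
    · exact (preBAv (by simp) β).mpr hβ
    · exact (preBAv (by simp) β).mpr hβ

lemma bav_card : ∀ M : ℕ, (BAvSet (M+1)).ncard = 2 ^ M := by
  intro M
  induction M with
  | zero =>
    have huniv : BAvSet 1 = Set.univ := by
      ext α
      simp only [BAvSet, Set.mem_setOf_eq, Set.mem_univ, iff_true]
      intro i j k hij hjk
      exact absurd (Fin.lt_def.mp hij) (by omega)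
    rw [huniv, Set.ncard_univ]
    simp [Nat.card_eq_fintype_card, Fintype.card_perm]
  | succ M ih =>
    rw [bavSet_succ M]
    have hdisj : Disjoint (pre (Fin.last (M+1)) '' BAvSet (M+1))
        (pre ⟨M, by omega⟩ '' BAvSet (M+1)) := by
      rw [Set.disjoint_left]
      rintro α ⟨β, _, rfl⟩ ⟨γ, _, hγ⟩
      have := congrArg (fun e : Perm (Fin (M+2)) => ((e 0 : Fin (M+2)) : ℕ)) hγ
      simp only [pre_zero] at this
      simp at this
    rw [Set.ncard_union_eq hdisj (Set.toFinite _) (Set.toFinite _),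
      Set.ncard_image_of_injective _ (pre_right_inj _),
      Set.ncard_image_of_injective _ (pre_right_inj _), ih]
    ring

lemma topSet (M : ℕ) :
    {β : Perm (Fin (M+3)) | BAv β ∧ (β 0 : ℕ) = M+2}
      = pre (Fin.last (M+2)) '' BAvSet (M+2) := by
  ext β
  simp only [Set.mem_setOf_eq, Set.mem_image, BAvSet]
  constructor
  · rintro ⟨hB, h0⟩
    obtain ⟨p, γ, rfl⟩ := pre_surj' β
    rw [pre_zero] at h0
    have hγ : BAv γ := (preBAv (by omega) γ).mp hB
    exact ⟨γ, hγ, by rw [show p = Fin.last (M+2) from Fin.ext (by simp [h0])]⟩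
  · rintro ⟨γ, hγ, rfl⟩
    exact ⟨(preBAv (by simp) γ).mpr hγ, by simp⟩

lemma solSet_succ (M : ℕ) :
    SolSet (M+4) = pre (Fin.last (M+3)) '' SolSet (M+3)
      ∪ pre ⟨M+2, by omega⟩ '' SolSet (M+3)
      ∪ pre ⟨M+1, by omega⟩ '' {β : Perm (Fin (M+3)) | BAv β ∧ (β 0 : ℕ) = M+2} := by
  ext α
  simp only [SolSet, Set.mem_union, Set.mem_image, Set.mem_setOf_eq]
  constructor
  · intro h
    obtain ⟨p, β, rfl⟩ := pre_surj' α
    have hp1 : M + 3 ≤ (p : ℕ) + 2 := by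
      have := sol_first (pre p β) h
      rwa [pre_zero] at this
    have hpN : (p : ℕ) ≤ M + 3 := by omega
    rcases (by omega : (p : ℕ) = M + 3 ∨ (p : ℕ) = M + 2 ∨ (p : ℕ) = M + 1) with hc | hc | hc
    · exact Or.inl (Or.inl ⟨β, (preA (by omega) β).mp h,
        by rw [show p = Fin.last (M+3) from Fin.ext (by simp [hc])]⟩)
    · exact Or.inl (Or.inr ⟨β, (preA (by omega) β).mp h,
        by rw [show p = (⟨M+2, by omega⟩ : Fin (M+4)) from Fin.ext (by simp [hc])]⟩)
    · exact Or.inr ⟨β, (preB (M := M+1) hc β).mp h,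
        by rw [show p = (⟨M+1, by omega⟩ : Fin (M+4)) from Fin.ext (by simp [hc])]⟩
  · rintro ((⟨β, hβ, rfl⟩ | ⟨β, hβ, rfl⟩) | ⟨β, hβ, rfl⟩)
    · exact (preA (by simp) β).mpr hβ
    · exact (preA (by simp) β).mpr hβ
    · exact (preB (M := M+1) (by simp) β).mpr hβ

lemma sol_card_succ (M : ℕ) :
    (SolSet (M+4)).ncard = 2 * (SolSet (M+3)).ncard + 2 ^ (M+1) := by
  rw [solSet_succ M]
  have hd1 : Disjoint
      (pre (Fin.last (M+3)) '' SolSet (M+3) ∪ pre ⟨M+2, by omega⟩ '' SolSet (M+3))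
      (pre ⟨M+1, by omega⟩ '' {β : Perm (Fin (M+3)) | BAv β ∧ (β 0 : ℕ) = M+2}) := by
    rw [Set.disjoint_left]
    rintro α (⟨β, _, rfl⟩ | ⟨β, _, rfl⟩) ⟨γ, _, hγ⟩ <;>
    · have := congrArg (fun e : Perm (Fin (M+4)) => ((e 0 : Fin (M+4)) : ℕ)) hγ
      simp only [pre_zero] at this
      simp at this
  have hd2 : Disjoint (pre (Fin.last (M+3)) '' SolSet (M+3))
      (pre ⟨M+2, by omega⟩ '' SolSet (M+3)) := by
    rw [Set.disjoint_left]
    rintro α ⟨β, _, rfl⟩ ⟨γ, _, hγ⟩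
    have := congrArg (fun e : Perm (Fin (M+4)) => ((e 0 : Fin (M+4)) : ℕ)) hγ
    simp only [pre_zero] at this
    simp at this
  rw [Set.ncard_union_eq hd1 (Set.toFinite _) (Set.toFinite _),
    Set.ncard_union_eq hd2 (Set.toFinite _) (Set.toFinite _),
    Set.ncard_image_of_injective _ (pre_right_inj _),
    Set.ncard_image_of_injective _ (pre_right_inj _),
    Set.ncard_image_of_injective _ (pre_right_inj _),
    topSet M,
    Set.ncard_image_of_injective _ (pre_right_inj _),
    bav_card (M+1)]
  ring

lemma sol_base : SolSet 3 = {Equiv.swap 1 2} := by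
  ext α
  simp only [SolSet, Set.mem_setOf_eq, Set.mem_singleton_iff, Sol, Occ, Occ3, Equiv.ext_iff, ExistsUnique]
  revert α
  decide

lemma sol_card : ∀ M : ℕ, (SolSet (M+3)).ncard = (M+1) * 2 ^ M := by
  intro M
  induction M with
  | zero => rw [sol_base, Set.ncard_singleton]; norm_num
  | succ M ih =>
    have := sol_card_succ M
    rw [ih] at this
    rw [this]
    ring

end S7

theorem stmt7 (n : ℕ) (hn : 3 ≤ n) :
    Set.ncard {α : Equiv.Perm (Fin n) |
        (¬ ∃ i j l : Fin n, i < j ∧ j < l ∧ α i < α j ∧ α j < α l) ∧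
        (∃! t : Fin n × Fin n × Fin n,
          t.1 < t.2.1 ∧ t.2.1 < t.2.2 ∧ α t.1 < α t.2.2 ∧ α t.2.2 < α t.2.1)}
      = (n - 2) * 2 ^ (n - 3) := by
  obtain ⟨M, rfl⟩ : ∃ M, n = M + 3 := ⟨n - 3, by omega⟩
  have hset : {α : Equiv.Perm (Fin (M+3)) |
      (¬ ∃ i j l : Fin (M+3), i < j ∧ j < l ∧ α i < α j ∧ α j < α l) ∧
      (∃! t : Fin (M+3) × Fin (M+3) × Fin (M+3),
        t.1 < t.2.1 ∧ t.2.1 < t.2.2 ∧ α t.1 < α t.2.2 ∧ α t.2.2 < α t.2.1)}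
      = S7.SolSet (M+3) := by
    ext α
    simp only [Set.mem_setOf_eq, S7.SolSet, S7.Sol, S7.Occ, S7.Occ3]
    constructor
    · rintro ⟨h1, h2⟩
      exact ⟨fun ⟨t, ht⟩ => h1 ⟨t.1, t.2.1, t.2.2, ht⟩, h2⟩
    · rintro ⟨h1, h2⟩
      exact ⟨fun ⟨i, j, l, h⟩ => h1 ⟨(i, j, l), h⟩, h2⟩
  rw [hset, S7.sol_card M, show M+3-2 = M+1 from by omega, show M+3-3 = M from by omega]
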